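/- Fix integers r ≥ 1 and n > r + 1, a real vector θ, and define for layers j with r+1 < j < n the gauge values g_n(j) = θ·(1/Q(n−r))·Σ_{t=j+1−r}^{n−j} 1/(t·ln t), with g_n(j) = θ for j ≤ r+1 and g_n(j) = 0 for j ≥ n, where Q(m) = Σ_{t=2}^m 1/(t·ln t). Then the sum of squared increments satisfies Σ_{j=r+1}^{n-1} (g_n(j) − g_n(j+1))² ≤ (4·|θ|²/Q(n−r)²)·Σ_{t=2}^{n−r} 1/(t²·(ln t)²). -/

import Mathlib

open Filter

/-- `Q(m) = Σ_{t=2}^m 1/(t·ln t)`. -/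
noncomputable def Q (m : ℕ) : ℝ := ∑ t ∈ Finset.Icc 2 m, 1 / ((t : ℝ) * Real.log t)

noncomputable def Hh (t : ℕ) : ℝ := 1 / ((t : ℝ) * Real.log t)
noncomputable def Ff (t : ℕ) : ℝ := 1 / ((t : ℝ) ^ 2 * Real.log t ^ 2)

lemma Hh_nonneg (t : ℕ) : 0 ≤ Hh t := by
  unfold Hh
  rcases le_or_gt t 1 with h | h
  · interval_cases t <;> simp
  · have : (0:ℝ) < Real.log t := Real.log_pos (by exact_mod_cast h)
    positivity

lemma Hh_two_pos : 0 < Hh 2 := by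
  unfold Hh
  have : (0:ℝ) < Real.log 2 := Real.log_pos (by norm_num)
  norm_num [this]

lemma Ff_nonneg (t : ℕ) : 0 ≤ Ff t := by
  unfold Ff; positivity

lemma Hh_sq (t : ℕ) : Hh t ^ 2 = Ff t := by
  unfold Hh Ff; rw [div_pow, mul_pow]; norm_num

lemma Q_eq (m : ℕ) : Q m = ∑ t ∈ Finset.Icc 2 m, Hh t := rfl

lemma Q_pos (m : ℕ) (hm : 2 ≤ m) : 0 < Q m := by
  rw [Q_eq]
  apply Finset.sum_pos' (fun t _ => Hh_nonneg t)
  exact ⟨2, by simp [Finset.mem_Icc]; omega, Hh_two_pos⟩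

lemma sum_insert_le' {s : Finset ℕ} {f : ℕ → ℝ} (hf : ∀ x, 0 ≤ f x) (a : ℕ) :
    ∑ x ∈ insert a s, f x ≤ f a + ∑ x ∈ s, f x := by
  by_cases h : a ∈ s
  · rw [Finset.insert_eq_self.2 h]; linarith [hf a]
  · rw [Finset.sum_insert h]

lemma S_diff_nonneg (a b : ℕ) :
    0 ≤ ∑ t ∈ Finset.Icc a b, Hh t - ∑ t ∈ Finset.Icc (a+1) (b-1), Hh t := by
  rw [sub_nonneg]
  apply Finset.sum_le_sum_of_subset_of_nonneg
  · intro x hx; simp only [Finset.mem_Icc] at *; omega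
  · intro x _ _; exact Hh_nonneg x

lemma S_diff_le (a b : ℕ) :
    ∑ t ∈ Finset.Icc a b, Hh t - ∑ t ∈ Finset.Icc (a+1) (b-1), Hh t
      ≤ Hh a + Hh b := by
  have hsub : Finset.Icc a b ⊆ insert a (insert b (Finset.Icc (a+1) (b-1))) := by
    intro x hx
    simp only [Finset.mem_Icc, Finset.mem_insert] at *; omega
  have h1 : ∑ t ∈ Finset.Icc a b, Hh t
      ≤ ∑ t ∈ insert a (insert b (Finset.Icc (a+1) (b-1))), Hh t := by
    apply Finset.sum_le_sum_of_subset_of_nonneg hsub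
    intro x _ _; exact Hh_nonneg x
  have h2 := sum_insert_le' Hh_nonneg (s := insert b (Finset.Icc (a+1) (b-1))) a
  have h3 := sum_insert_le' Hh_nonneg (s := Finset.Icc (a+1) (b-1)) b
  linarith

lemma Icc_partition (m : ℕ) (hm : 4 ≤ m) (f : ℕ → ℝ) :
    ∑ t ∈ Finset.Icc 2 m, f t
      = f 2 + (f (m-1) + (f m + ∑ t ∈ Finset.Icc 3 (m-2), f t)) := by
  have he : Finset.Icc 2 m = insert 2 (insert (m-1) (insert m (Finset.Icc 3 (m-2)))) := by
    ext x; simp only [Finset.mem_Icc, Finset.mem_insert]; omega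
  rw [he, Finset.sum_insert, Finset.sum_insert, Finset.sum_insert]
  · simp only [Finset.mem_Icc]; omega
  · simp only [Finset.mem_insert, Finset.mem_Icc]; omega
  · simp only [Finset.mem_insert, Finset.mem_Icc]; omega

lemma normsq_smul {d' : ℕ} (x : ℝ) (θ : EuclideanSpace ℝ (Fin d')) :
    ‖x • θ‖ ^ 2 = x ^ 2 * ‖θ‖ ^ 2 := by
  rw [norm_smul, mul_pow, Real.norm_eq_abs, sq_abs]

set_option maxHeartbeats 1000000 in
/-- For fixed `r ≥ 1` and `n > r + 1`, a vector `θ ∈ ℝ^{d'}`, and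
the gauge interpolation `g_n(j) = θ·(1/Q(n−r))·Σ_{t=j+1−r}^{n−j} 1/(t·ln t)` for
`r+1 < j < n`, with `g_n(j) = θ` for `j ≤ r+1` and `g_n(j) = 0` for `j ≥ n`, the
sum of squared increments satisfies
`Σ_{j=r+1}^{n-1} ‖g_n(j) − g_n(j+1)‖² ≤ (4·‖θ‖²/Q(n−r)²)·Σ_{t=2}^{n−r} 1/(t²·(ln t)²)`. -/
theorem gauge_increment_bound
    (d' : ℕ) (θ : EuclideanSpace ℝ (Fin d'))
    (r n : ℕ) (hr : 1 ≤ r) (hn : r + 1 < n)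
    (g : ℕ → EuclideanSpace ℝ (Fin d'))
    (hg_low : ∀ j : ℕ, j ≤ r + 1 → g j = θ)
    (hg_high : ∀ j : ℕ, n ≤ j → g j = 0)
    (hg_mid : ∀ j : ℕ, r + 1 < j → j < n →
      g j = ((1 / Q (n - r)) *
        ∑ t ∈ Finset.Icc (j + 1 - r) (n - j), 1 / ((t : ℝ) * Real.log t)) • θ) :
    ∑ j ∈ Finset.Icc (r + 1) (n - 1), ‖g j - g (j + 1)‖ ^ 2
      ≤ 4 * ‖θ‖ ^ 2 / (Q (n - r)) ^ 2 *
        ∑ t ∈ Finset.Icc 2 (n - r), 1 / ((t : ℝ) ^ 2 * Real.log t ^ 2) := by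
  have hHh : ∀ s : Finset ℕ, ∑ t ∈ s, (1 / ((t:ℝ) * Real.log t)) = ∑ t ∈ s, Hh t :=
    fun s => rfl
  have hFf : ∑ t ∈ Finset.Icc 2 (n-r), (1 / ((t:ℝ)^2 * Real.log t ^ 2))
      = ∑ t ∈ Finset.Icc 2 (n-r), Ff t := rfl
  rw [hFf]
  set m := n - r with hmdef
  have hm2 : 2 ≤ m := by omega
  have hQpos : 0 < Q m := Q_pos m hm2
  have hθ : (0:ℝ) ≤ ‖θ‖ ^ 2 := sq_nonneg _
  -- values of g
  have hg1 : g (r+1) = θ := hg_low _ le_rfl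
  -- case m = 2
  rcases eq_or_lt_of_le hm2 with hm2' | hm3
  · -- n = r + 2
    have hn2 : n = r + 2 := by omega
    have hset : Finset.Icc (r+1) (n-1) = {r+1} := by
      rw [hn2]; norm_num
    have hg2 : g (r+2) = 0 := hg_high _ (by omega)
    have hIcc : Finset.Icc 2 m = {2} := by rw [← hm2']; norm_num
    have hQ2 : Q m = Hh 2 := by rw [Q_eq, hIcc, Finset.sum_singleton]
    have hF2 : (0:ℝ) < Ff 2 := by rw [← Hh_sq]; exact pow_pos Hh_two_pos 2
    rw [hset, Finset.sum_singleton, hIcc, Finset.sum_singleton, hg1]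
    rw [show r + 1 + 1 = r + 2 from rfl, hg2, sub_zero, hQ2, Hh_sq]
    rw [div_mul_eq_mul_div, le_div_iff₀ hF2]
    nlinarith [mul_nonneg hθ hF2.le]
  · rcases eq_or_lt_of_le (show 3 ≤ m by omega) with hm3' | hm4
    · -- n = r + 3
      have hn3 : n = r + 3 := by omega
      have hset : Finset.Icc (r+1) (n-1) = {r+1, r+2} := by
        rw [hn3]; ext x; simp [Finset.mem_Icc]; omega
      have hg2 : g (r+2) = 0 := by
        have h := hg_mid (r+2) (by omega) (by omega)
        have : Finset.Icc (r+2+1-r) (n-(r+2)) = ∅ := by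
          apply Finset.Icc_eq_empty; omega
        rw [this] at h; simpa using h
      have hg3 : g (r+3) = 0 := hg_high _ (by omega)
      have hIcc : Finset.Icc 2 m = {2, 3} := by
        rw [← hm3']; ext x; simp [Finset.mem_Icc]; omega
      have hQ3 : Q m = Hh 2 + Hh 3 := by
        rw [Q_eq, hIcc]; simp
      rw [hset, hIcc]
      rw [Finset.sum_pair (by omega : r+1 ≠ r+2), Finset.sum_pair (by norm_num : (2:ℕ) ≠ 3)]
      rw [hg1, show r + 1 + 1 = r + 2 from rfl, show r + 2 + 1 = r + 3 from rfl,
        hg2, hg3, sub_zero, sub_zero, norm_zero]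
      have key : Q m ^ 2 ≤ 4 * (Ff 2 + Ff 3) := by
        rw [hQ3, ← Hh_sq 2, ← Hh_sq 3]
        nlinarith [sq_nonneg (Hh 2 - Hh 3), Hh_nonneg 2, Hh_nonneg 3]
      rw [div_mul_eq_mul_div, le_div_iff₀ (by positivity)]
      nlinarith [sq_nonneg ‖θ‖]
    · -- main case: m ≥ 4
      have hm4 : 4 ≤ m := hm4
      have hg2 : g (r+2) = ((1 / Q m) * ∑ t ∈ Finset.Icc 3 (m-2), Hh t) • θ := by
        have h := hg_mid (r+2) (by omega) (by omega)
        have e1 : r+2+1-r = 3 := by omega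
        have e2 : n - (r+2) = m-2 := by omega
        rw [e1, e2, hHh] at h; exact h
      have hzero : ∀ k, r+1 < k → n ≤ k+2 → g k = 0 := by
        intro k hk1 hk2
        rcases le_or_gt n k with h | h
        · exact hg_high _ h
        · have hmid := hg_mid k hk1 h
          have : Finset.Icc (k+1-r) (n-k) = ∅ := by
            apply Finset.Icc_eq_empty; omega
          rw [this] at hmid; simpa using hmid
      -- bound on the first increment
      have hT1 : ‖g (r+1) - g (r+1+1)‖ ^ 2
          ≤ 4 / Q m ^ 2 * ‖θ‖ ^ 2 * (Ff 2 + Ff (m-1) + Ff m) := by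
        have hpart := Icc_partition m hm4 Hh
        rw [← Q_eq] at hpart
        have hco : θ - ((1 / Q m) * ∑ t ∈ Finset.Icc 3 (m-2), Hh t) • θ
            = ((Hh 2 + Hh (m-1) + Hh m) / Q m) • θ := by
          rw [show θ - ((1 / Q m) * ∑ t ∈ Finset.Icc 3 (m-2), Hh t) • θ
              = (1 - (1 / Q m) * ∑ t ∈ Finset.Icc 3 (m-2), Hh t) • θ by
            rw [sub_smul, one_smul]]
          congr 1
          field_simp
          linarith
        rw [show r + 1 + 1 = r + 2 from rfl, hg1, hg2, hco, normsq_smul]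
        have h2 := Hh_sq 2; have hm1 := Hh_sq (m-1); have hmm := Hh_sq m
        have d2 := Hh_nonneg 2; have dm1 := Hh_nonneg (m-1); have dmm := Hh_nonneg m
        have hQ2 : (0:ℝ) < Q m ^ 2 := by positivity
        have hkey : (Hh 2 + Hh (m-1) + Hh m) ^ 2 * ‖θ‖ ^ 2
            ≤ 4 * ‖θ‖ ^ 2 * (Ff 2 + Ff (m-1) + Ff m) := by
          have h3 : (Hh 2 + Hh (m-1) + Hh m) ^ 2 ≤ 4 * (Ff 2 + Ff (m-1) + Ff m) := by
            nlinarith [sq_nonneg (Hh 2 - Hh (m-1)), sq_nonneg (Hh 2 - Hh m),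
              sq_nonneg (Hh (m-1) - Hh m)]
          nlinarith [mul_le_mul_of_nonneg_right h3 hθ]
        calc ((Hh 2 + Hh (m-1) + Hh m) / Q m) ^ 2 * ‖θ‖ ^ 2
            = (Hh 2 + Hh (m-1) + Hh m) ^ 2 * ‖θ‖ ^ 2 / Q m ^ 2 := by
              rw [div_pow]; ring
          _ ≤ 4 * ‖θ‖ ^ 2 * (Ff 2 + Ff (m-1) + Ff m) / Q m ^ 2 :=
              (div_le_div_iff_of_pos_right hQ2).mpr hkey
          _ = 4 / Q m ^ 2 * ‖θ‖ ^ 2 * (Ff 2 + Ff (m-1) + Ff m) := by ring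
      -- bound on the other increments
      set GG : ℕ → ℝ := fun j => if n ≤ j + 2 then 0 else Ff (j+1-r) + Ff (n-j) with hGG
      have hGGnn : ∀ j, 0 ≤ GG j := by
        intro j; rw [hGG]; dsimp only
        split
        · exact le_refl 0
        · exact add_nonneg (Ff_nonneg _) (Ff_nonneg _)
      have hTmid : ∀ j ∈ Finset.Icc (r+2) (n-1),
          ‖g j - g (j+1)‖ ^ 2 ≤ 2 / Q m ^ 2 * ‖θ‖ ^ 2 * GG j := by
        intro j hj
        simp only [Finset.mem_Icc] at hj
        by_cases hjn : n ≤ j + 2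
        · have z1 : g j = 0 := hzero j (by omega) hjn
          have z2 : g (j+1) = 0 := hzero (j+1) (by omega) (by omega)
          rw [z1, z2, sub_zero, norm_zero, hGG]
          simp [hjn]
        · -- r + 2 ≤ j ≤ n - 3
          have hj3 : j + 3 ≤ n := by omega
          have hgj : g j = ((1 / Q m) * ∑ t ∈ Finset.Icc (j+1-r) (n-j), Hh t) • θ := by
            have h := hg_mid j (by omega) (by omega); rw [hHh] at h; exact h
          have hgj1 : g (j+1) = ((1 / Q m) * ∑ t ∈ Finset.Icc (j+1-r+1) (n-j-1), Hh t) • θ := by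
            have h := hg_mid (j+1) (by omega) (by omega)
            have e1 : j+1+1-r = j+1-r+1 := by omega
            have e2 : n - (j+1) = n-j-1 := by omega
            rw [e1, e2, hHh] at h; exact h
          rw [hgj, hgj1, ← sub_smul, ← mul_sub, normsq_smul]
          set D : ℝ := ∑ t ∈ Finset.Icc (j+1-r) (n-j), Hh t
            - ∑ t ∈ Finset.Icc (j+1-r+1) (n-j-1), Hh t with hD
          have hD0 : 0 ≤ D := S_diff_nonneg (j+1-r) (n-j)
          have hDle : D ≤ Hh (j+1-r) + Hh (n-j) := S_diff_le (j+1-r) (n-j)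
          have hDsq : D ^ 2 ≤ 2 * (Ff (j+1-r) + Ff (n-j)) := by
            have h1 := Hh_sq (j+1-r); have h2 := Hh_sq (n-j)
            nlinarith [sq_nonneg (Hh (j+1-r) - Hh (n-j))]
          have hGGj : GG j = Ff (j+1-r) + Ff (n-j) := by
            rw [hGG]; simp only; rw [if_neg hjn]
          rw [hGGj]
          have hQ2 : (0:ℝ) < Q m ^ 2 := by positivity
          have hkey : D ^ 2 * ‖θ‖ ^ 2 ≤ 2 * ‖θ‖ ^ 2 * (Ff (j+1-r) + Ff (n-j)) := by
            nlinarith [mul_le_mul_of_nonneg_right hDsq hθ]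
          calc (1 / Q m * D) ^ 2 * ‖θ‖ ^ 2
              = D ^ 2 * ‖θ‖ ^ 2 / Q m ^ 2 := by
                rw [mul_pow, div_pow, one_pow]; ring
            _ ≤ 2 * ‖θ‖ ^ 2 * (Ff (j+1-r) + Ff (n-j)) / Q m ^ 2 :=
                (div_le_div_iff_of_pos_right hQ2).mpr hkey
            _ = 2 / Q m ^ 2 * ‖θ‖ ^ 2 * (Ff (j+1-r) + Ff (n-j)) := by ring
      -- sum of GG
      have hsumGG : ∑ j ∈ Finset.Icc (r+2) (n-1), GG j
          ≤ 2 * ∑ t ∈ Finset.Icc 3 (m-2), Ff t := by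
        have hstep : ∑ j ∈ Finset.Icc (r+2) (n-1), GG j
            = ∑ j ∈ Finset.Icc (r+2) (n-3), GG j := by
          rw [eq_comm]
          apply Finset.sum_subset
          · intro x hx; simp only [Finset.mem_Icc] at *; omega
          · intro x hx hx'
            simp only [Finset.mem_Icc] at hx hx'
            rw [hGG]; simp only; rw [if_pos (by omega)]
        have hval : ∑ j ∈ Finset.Icc (r+2) (n-3), GG j
            = ∑ j ∈ Finset.Icc (r+2) (n-3), (Ff (j+1-r) + Ff (n-j)) := by
          apply Finset.sum_congr rfl
          intro x hx; simp only [Finset.mem_Icc] at hx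
          rw [hGG]; simp only; rw [if_neg (by omega)]
        have hb1 : ∑ j ∈ Finset.Icc (r+2) (n-3), Ff (j+1-r)
            = ∑ t ∈ Finset.Icc 3 (m-2), Ff t := by
          apply Finset.sum_bij' (fun j _ => j + 1 - r) (fun t _ => t + r - 1)
          · intro a ha; simp only [Finset.mem_Icc] at *; omega
          · intro a ha; simp only [Finset.mem_Icc] at *; omega
          · intro a ha; simp only [Finset.mem_Icc] at ha; omega
          · intro a ha; simp only [Finset.mem_Icc] at ha; omega
          · intro a ha; rfl
        have hb2 : ∑ j ∈ Finset.Icc (r+2) (n-3), Ff (n-j)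
            = ∑ t ∈ Finset.Icc 3 (m-2), Ff t := by
          apply Finset.sum_bij' (fun j _ => n - j) (fun t _ => n - t)
          · intro a ha; simp only [Finset.mem_Icc] at *; omega
          · intro a ha; simp only [Finset.mem_Icc] at *; omega
          · intro a ha; simp only [Finset.mem_Icc] at ha; omega
          · intro a ha; simp only [Finset.mem_Icc] at ha; omega
          · intro a ha; rfl
        rw [hstep, hval, Finset.sum_add_distrib, hb1, hb2]
        exact le_of_eq (by ring)
      -- assemble
      have hins : Finset.Icc (r+1) (n-1) = insert (r+1) (Finset.Icc (r+2) (n-1)) := by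
        ext x; simp only [Finset.mem_Icc, Finset.mem_insert]; omega
      rw [hins, Finset.sum_insert (by simp only [Finset.mem_Icc]; omega)]
      have hsum : ∑ j ∈ Finset.Icc (r+2) (n-1), ‖g j - g (j+1)‖ ^ 2
          ≤ 2 / Q m ^ 2 * ‖θ‖ ^ 2 * (2 * ∑ t ∈ Finset.Icc 3 (m-2), Ff t) := by
        calc ∑ j ∈ Finset.Icc (r+2) (n-1), ‖g j - g (j+1)‖ ^ 2
            ≤ ∑ j ∈ Finset.Icc (r+2) (n-1), 2 / Q m ^ 2 * ‖θ‖ ^ 2 * GG j :=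
              Finset.sum_le_sum hTmid
          _ = 2 / Q m ^ 2 * ‖θ‖ ^ 2 * ∑ j ∈ Finset.Icc (r+2) (n-1), GG j := by
              rw [Finset.mul_sum]
          _ ≤ 2 / Q m ^ 2 * ‖θ‖ ^ 2 * (2 * ∑ t ∈ Finset.Icc 3 (m-2), Ff t) := by
              apply mul_le_mul_of_nonneg_left hsumGG (by positivity)
      rw [Icc_partition m hm4 Ff]
      have hrhs : 4 * ‖θ‖ ^ 2 / Q m ^ 2 * (Ff 2 + (Ff (m-1) + (Ff m + ∑ t ∈ Finset.Icc 3 (m-2), Ff t)))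
          = 4 / Q m ^ 2 * ‖θ‖ ^ 2 * (Ff 2 + Ff (m-1) + Ff m)
            + 2 / Q m ^ 2 * ‖θ‖ ^ 2 * (2 * ∑ t ∈ Finset.Icc 3 (m-2), Ff t) := by
        ring
      rw [hrhs]
      exact add_le_add hT1 hsum
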